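/- Let Γ₀ ≤ Γ be such that for all g ∈ Γ \ Γ₀, the subgroup Γ₀ ∩ gΓ₀g⁻¹ has infinite index in Γ₀. Then for every finite subsets A, B ⊆ Γ with B disjoint from Γ₀, there exists t ∈ Γ₀ such that t ∉ A Γ₀ B. -/

import Mathlib

open scoped Pointwise

lemma mem_single_mul_single {Γ : Type*} [Group Γ] (Γ₀ : Subgroup Γ) (a b u : Γ) :
    u ∈ ({a} : Set Γ) * (Γ₀ : Set Γ) * {b} ↔ ∃ x ∈ Γ₀, a * x * b = u := by
  constructor
  · rintro ⟨ax, ⟨a', ha', x, hx, rfl⟩, b', hb', rfl⟩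
    rw [Set.mem_singleton_iff] at ha' hb'
    subst ha'; subst hb'
    exact ⟨x, hx, rfl⟩
  · rintro ⟨x, hx, rfl⟩
    exact ⟨a * x, ⟨a, rfl, x, hx, rfl⟩, b, rfl, rfl⟩

/-- If `Γ₀ ∩ gΓ₀g⁻¹` has infinite index in `Γ₀` for all `g ∉ Γ₀`, then for all
finite subsets `A B ⊆ Γ` with `B` disjoint from `Γ₀` there exists `t ∈ Γ₀`
with `t ∉ A Γ₀ B`. -/
theorem exists_mem_not_mem_mul_coset {Γ : Type*} [Group Γ] (Γ₀ : Subgroup Γ)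
    (hqn : ∀ g : Γ, g ∉ Γ₀ →
      (Subgroup.map (MulAut.conj g).toMonoidHom Γ₀).relIndex Γ₀ = 0)
    (A B : Set Γ) (hA : A.Finite) (hB : B.Finite) (hdisj : B ∩ (Γ₀ : Set Γ) = ∅) :
    ∃ t ∈ Γ₀, t ∉ A * (Γ₀ : Set Γ) * B := by
  classical
  by_contra hcon
  push_neg at hcon
  have hBnot : ∀ b ∈ B, b ∉ Γ₀ := by
    intro b hb hbΓ
    have : b ∈ B ∩ (Γ₀ : Set Γ) := ⟨hb, hbΓ⟩
    rw [hdisj] at this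
    exact this
  set H : Γ × Γ → Subgroup Γ₀ := fun p =>
    (Subgroup.map (MulAut.conj p.2⁻¹).toMonoidHom Γ₀).subgroupOf Γ₀ with hH
  set g : Γ × Γ → Γ₀ := fun p =>
    if h : ∃ t : Γ₀, (t : Γ) ∈ ({p.1} : Set Γ) * (Γ₀ : Set Γ) * {p.2} then h.choose
    else 1 with hg
  set s : Finset (Γ × Γ) := hA.toFinset ×ˢ hB.toFinset with hs
  have hcovers : ⋃ i ∈ s, (g i) • ((H i : Subgroup Γ₀) : Set Γ₀) = Set.univ := by
    apply Set.eq_univ_of_forall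
    intro t
    have ht : (t : Γ) ∈ A * (Γ₀ : Set Γ) * B := hcon t t.2
    obtain ⟨ax, ⟨a, ha, x, hx, rfl⟩, b, hb, habt⟩ := ht
    have habt' : a * x * b = (t : Γ) := habt
    have hex : ∃ u : Γ₀, (u : Γ) ∈ ({a} : Set Γ) * (Γ₀ : Set Γ) * {b} :=
      ⟨t, (mem_single_mul_single Γ₀ a b t).mpr ⟨x, hx, habt'⟩⟩
    have hmem : ((a, b) : Γ × Γ) ∈ s := by
      simp [hs, hA.mem_toFinset, hB.mem_toFinset, ha, hb]
    refine Set.mem_biUnion hmem ?_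
    rw [mem_leftCoset_iff]
    have hgdef : g (a, b) = hex.choose := dif_pos hex
    obtain ⟨x₀, hx₀, ht₀⟩ := (mem_single_mul_single Γ₀ a b _).mp hex.choose_spec
    show (g (a, b))⁻¹ * t ∈ H (a, b)
    rw [hgdef]
    have : (((hex.choose)⁻¹ * t : Γ₀) : Γ) ∈
        Subgroup.map (MulAut.conj (b⁻¹)).toMonoidHom Γ₀ := by
      refine ⟨x₀⁻¹ * x, mul_mem (inv_mem hx₀) hx, ?_⟩
      push_cast
      rw [← habt', ← ht₀]
      simp only [MulEquiv.coe_toMonoidHom, MulAut.conj_apply]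
      group
    exact this
  obtain ⟨⟨a, b⟩, hks, hfin⟩ := Subgroup.exists_finiteIndex_of_leftCoset_cover hcovers
  have hbB : b ∈ B := by
    simp only [hs, Finset.mem_product, hB.mem_toFinset] at hks
    exact hks.2
  have hbinv : b⁻¹ ∉ Γ₀ := fun h => hBnot b hbB (by simpa using inv_mem h)
  have h0 : (H (a, b)).index = 0 := hqn b⁻¹ hbinv
  exact hfin.index_ne_zero h0
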